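/- Let K be a Cantor space and let α : K ≃ₜ K be a minimal homeomorphism. Consider the additive group LocallyConstant K ℤ of locally constant (equivalently, continuous) integer-valued functions on K, and the group endomorphism Φ : LocallyConstant K ℤ → LocallyConstant K ℤ given by Φ(f) = f ∘ α − f. Then the range of Φ is not a finitely generated additive group. -/

import Mathlib

open Set

/-- In a perfect compact Hausdorff totally disconnected space, every nonempty clopen set
splits into a nonempty clopen subset with nonempty clopen complement-in-`V`. -/
lemma exists_clopen_split' {K : Type*} [TopologicalSpace K] [CompactSpace K] [T2Space K]
    [TotallyDisconnectedSpace K] (hperf : Perfect (Set.univ : Set K))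
    {V : Set K} (hV : IsClopen V) (hVne : V.Nonempty) :
    ∃ U : Set K, IsClopen U ∧ U.Nonempty ∧ U ⊆ V ∧ (V \ U).Nonempty := by
  obtain ⟨x, hx⟩ := hVne
  have hacc : AccPt x (Filter.principal (Set.univ : Set K)) := hperf.acc x (mem_univ x)
  rw [accPt_iff_nhds] at hacc
  obtain ⟨y, ⟨hyV, -⟩, hyx⟩ := hacc V (hV.isOpen.mem_nhds hx)
  obtain ⟨C, hC, hxC, hyC⟩ := exists_isClopen_of_totally_separated (Ne.symm hyx : x ≠ y)
  refine ⟨V ∩ C, hV.inter hC, ⟨x, hx, hxC⟩, inter_subset_left, ⟨y, hyV, fun h => hyC h.2⟩⟩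

lemma exists_disjoint_clopens {K : Type*} [TopologicalSpace K] [CompactSpace K] [T2Space K]
    [TotallyDisconnectedSpace K] [Nonempty K] (hperf : Perfect (Set.univ : Set K)) :
    ∃ U : ℕ → Set K, (∀ n, IsClopen (U n)) ∧ (∀ n, (U n).Nonempty) ∧
      Pairwise (Function.onFun Disjoint U) := by
  have key : ∀ V : {S : Set K // IsClopen S ∧ S.Nonempty},
      ∃ p : {S : Set K // IsClopen S ∧ S.Nonempty} × {S : Set K // IsClopen S ∧ S.Nonempty},
        (p.1 : Set K) ⊆ V ∧ (p.2 : Set K) ⊆ V ∧ Disjoint (p.1 : Set K) (p.2 : Set K) := by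
    rintro ⟨V, hV, hVne⟩
    obtain ⟨U, hU, hUne, hUV, hrest⟩ := exists_clopen_split' hperf hV hVne
    exact ⟨(⟨U, hU, hUne⟩, ⟨V \ U, hV.diff hU, hrest⟩), hUV, diff_subset,
      disjoint_sdiff_right⟩
  choose g hg1 hg2 hg3 using key
  let Vs : ℕ → {S : Set K // IsClopen S ∧ S.Nonempty} :=
    fun n => Nat.rec ⟨Set.univ, isClopen_univ, univ_nonempty⟩ (fun _ W => (g W).2) n
  let Us : ℕ → Set K := fun n => ((g (Vs n)).1 : Set K)
  have hVsucc : ∀ n, (Vs (n + 1)).1 ⊆ (Vs n).1 := by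
    intro n
    show ((g (Vs n)).2).val ⊆ (Vs n).val
    exact hg2 (Vs n)
  have hVanti : ∀ m n, m ≤ n → (Vs n).1 ⊆ (Vs m).1 := by
    intro m n h
    induction h with
    | refl => exact subset_rfl
    | step h ih => exact (hVsucc _).trans ih
  have hdisj : ∀ m n, m < n → Disjoint (Us m) (Us n) := by
    intro m n hmn
    have h1 : Us n ⊆ (Vs n).1 := hg1 (Vs n)
    have h2 : (Vs n).1 ⊆ (Vs (m + 1)).1 := hVanti _ _ hmn
    exact ((hg3 (Vs m)).mono_right (h1.trans h2))
  refine ⟨Us, fun n => (g (Vs n)).1.2.1, fun n => (g (Vs n)).1.2.2, ?_⟩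
  intro m n hmn
  rcases lt_or_gt_of_ne hmn with h | h
  · exact hdisj m n h
  · exact (hdisj n m h).symm

/-- Let `K` be a Cantor space and `α : K ≃ₜ K` a minimal homeomorphism. Then the
range of the endomorphism `Φ : f ↦ f ∘ α − f` of the group `LocallyConstant K ℤ` is not a
finitely generated additive group. -/
theorem range_coboundary_map_not_fg
    {K : Type*} [TopologicalSpace K] [CompactSpace K] [TopologicalSpace.MetrizableSpace K]
    [TotallyDisconnectedSpace K] [Nonempty K]
    (hperf : Perfect (Set.univ : Set K))
    (α : K ≃ₜ K)
    (hmin : ∀ x : K, Dense (Set.range fun n : ℤ => (α.toEquiv ^ n) x))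
    (Φ : LocallyConstant K ℤ →+ LocallyConstant K ℤ)
    (hΦ : ∀ (f : LocallyConstant K ℤ) (x : K), Φ f x = f (α x) - f x) :
    ¬ (AddMonoidHom.range Φ).FG := by
  intro hfg
  classical
  set M := LocallyConstant K ℤ
  let Φl : M →ₗ[ℤ] M := Φ.toIntLinearMap
  -- the range of Φl is FG as a submodule
  have hrange : (LinearMap.range Φl).FG := by
    have : LinearMap.range Φl = AddSubgroup.toIntSubmodule Φ.range := by
      ext f
      simp [Φl, AddMonoidHom.mem_range, LinearMap.mem_range]
    rw [this, Submodule.fg_iff_addSubgroup_fg,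
      AddSubgroup.toIntSubmodule_toAddSubgroup]
    exact hfg
  -- the kernel of Φl is the constants, hence FG
  have hker : (LinearMap.ker Φl) = Submodule.span ℤ {(1 : M)} := by
    apply le_antisymm
    · intro f hf
      have hf' : ∀ x : K, f (α x) = f x := by
        intro x
        have := hΦ f x
        rw [show Φ f = 0 from hf] at this
        have h0 : (0 : M) x = 0 := rfl
        rw [h0] at this
        linarith
      obtain ⟨x₀⟩ := ‹Nonempty K›
      -- f is constant on the orbit of x₀
      have horb : ∀ n : ℤ, f ((α.toEquiv ^ n) x₀) = f x₀ := by
        have hfun : ∀ n : ℤ, ∀ x : K, f ((α.toEquiv ^ n) x) = f x := by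
          intro n
          induction n using Int.induction_on with
          | zero => intro x; simp
          | succ k ih =>
            intro x
            have : (α.toEquiv ^ ((k : ℤ) + 1)) x = (α.toEquiv ^ (k : ℤ)) (α x) := by
              rw [zpow_add_one]
              rfl
            rw [this, ih, hf']
          | pred k ih =>
            intro x
            have : (α.toEquiv ^ (-(k : ℤ) - 1)) x = (α.toEquiv ^ (-(k : ℤ))) (α.symm x) := by
              rw [zpow_sub_one, Equiv.Perm.mul_apply, Equiv.Perm.inv_def]
              rfl
            rw [this, ih, ← hf' (α.symm x)]
            simp
        intro n; exact hfun n x₀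
      -- hence f is constant
      have hconst : ∀ x : K, f x = f x₀ := by
        intro x
        have hclosed : IsClosed (f ⁻¹' {f x₀}) := (f.isLocallyConstant.isClosed_fiber _)
        have hsub : Set.range (fun n : ℤ => (α.toEquiv ^ n) x₀) ⊆ f ⁻¹' {f x₀} := by
          rintro - ⟨n, rfl⟩
          exact horb n
        have hd : Dense (f ⁻¹' {f x₀}) := (hmin x₀).mono hsub
        have : f ⁻¹' {f x₀} = Set.univ := by
          rw [← hclosed.closure_eq]; exact hd.closure_eq
        exact (Set.eq_univ_iff_forall.mp this x : f x = f x₀)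
      have : f = (f x₀) • (1 : M) := by
        ext x
        show f x = f x₀ • (1 : ℤ)
        rw [smul_eq_mul, mul_one]
        exact hconst x
      rw [this]
      exact Submodule.smul_mem _ _ (Submodule.mem_span_singleton_self _)
    · rw [Submodule.span_singleton_le_iff_mem, LinearMap.mem_ker]
      ext x
      simp [Φl, hΦ]
  have hkerfg : (LinearMap.ker Φl).FG := by
    rw [hker]; exact ⟨{1}, by simp⟩
  -- hence the whole module is FG
  have htop : (⊤ : Submodule ℤ M).FG := by
    apply Submodule.fg_of_fg_map_of_fg_inf_ker Φl
    · rwa [Submodule.map_top]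
    · rwa [top_inf_eq]
  have hMfin : Module.Finite ℤ M := Module.finite_def.mpr htop
  have hnoeth : IsNoetherian ℤ M := isNoetherian_of_isNoetherianRing_of_finite ℤ M
  -- but M contains an infinite linearly independent family
  obtain ⟨U, hUc, hUne, hUd⟩ := exists_disjoint_clopens hperf
  choose pt hpt using hUne
  let e : ℕ → M := fun n => LocallyConstant.indicator (1 : M) (hUc n)
  have he : LinearIndependent ℤ e := by
    rw [linearIndependent_iff']
    intro s c hsum i hi
    have heval := congrArg (LocallyConstant.evalₗ ℤ (pt i)) hsum
    rw [map_sum, map_zero] at heval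
    have heval' : ∑ k ∈ s, c k • (e k (pt i)) = 0 := by
      refine Eq.trans (Finset.sum_congr rfl fun k _ => ?_) heval
      rfl
    have hsingle : ∀ j ∈ s, j ≠ i → c j • (e j (pt i)) = 0 := by
      intro j _ hji
      have hnot : pt i ∉ U j := fun h =>
        Set.disjoint_left.mp (hUd (Ne.symm hji)) (hpt i) h
      have h0 : e j (pt i) = 0 := LocallyConstant.indicator_of_notMem (1 : M) (hUc j) hnot
      rw [h0, smul_zero]
    rw [Finset.sum_eq_single i hsingle (fun h => absurd hi h)] at heval'
    have hmem : e i (pt i) = 1 :=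
      (LocallyConstant.indicator_of_mem (1 : M) (hUc i) (hpt i)).trans rfl
    rwa [hmem, smul_eq_mul, mul_one] at heval'
  have : Finite ℕ := he.finite_of_isNoetherian
  exact not_finite ℕ
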